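/- arXiv:1710.00582 — 4 statements merged into one kernel-verified Lean document; each statement's English description precedes it below -/
import Mathlib

section
/- Let G = V^t ⋊ H where H is a cyclic group of prime order p and V is a faithful irreducible H-module over a finite field. Then d(G) = t + 1 and m(G) = t + 1, i.e., every irredundant generating set of G has size exactly t + 1. -/
open Subgroup
open scoped Classical

/-- A set `s` is an irredundant generating set of the group `G`: it generates `G`
but no proper subset does. -/
def IrredSet {G : Type*} [Group G] (s : Set G) : Prop :=
  Subgroup.closure s = ⊤ ∧ ∀ x ∈ s, Subgroup.closure (s \ {x}) ≠ ⊤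

/-- `mIrr G` is the largest size of an irredundant generating set of `G`. -/
noncomputable def mIrr (G : Type*) [Group G] : ℕ :=
  sSup {n | ∃ s : Set G, s.Finite ∧ s.ncard = n ∧ IrredSet s}

/-- `dGen G` is the smallest size of a generating set of `G`. -/
noncomputable def dGen (G : Type*) [Group G] : ℕ :=
  sInf {n | ∃ s : Set G, s.Finite ∧ s.ncard = n ∧ Subgroup.closure s = ⊤}

/-- A sequence `g : Fin n → G` is an irredundant generating sequence:
it generates `G` but no proper subsequence does. -/
def IrredSeq {G : Type*} [Group G] {n : ℕ} (g : Fin n → G) : Prop :=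
  Subgroup.closure (Set.range g) = ⊤ ∧
  ∀ i : Fin n, Subgroup.closure (g '' {i}ᶜ) ≠ ⊤

/-- `G` satisfies the replacement property: for every irredundant generating
sequence of maximal length `mIrr G` and every nontrivial `x : G`, some entry
can be replaced by `x` so that the sequence still generates. -/
def ReplacementProperty (G : Type*) [Group G] : Prop :=
  ∀ g : Fin (mIrr G) → G, IrredSeq g → ∀ x : G, x ≠ 1 →
    ∃ i, Subgroup.closure (Set.range (Function.update g i x)) = ⊤

/-- The strong replacement property: replacement holds for irredundant
generating sequences of any length. -/
def StrongReplacementProperty (G : Type*) [Group G] : Prop :=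
  ∀ (n : ℕ) (g : Fin n → G), IrredSeq g → ∀ x : G, x ≠ 1 →
    ∃ i, Subgroup.closure (Set.range (Function.update g i x)) = ⊤

/-- `G` is a K-group: its subgroup lattice is complemented. -/
def IsKGroup (G : Type*) [Group G] : Prop :=
  ∀ H : Subgroup G, ∃ X : Subgroup G, H ⊔ X = ⊤ ∧ H ⊓ X = ⊥

/-- `μ` is the Möbius function of the subgroup lattice of `G`. -/
def IsMobius {G : Type*} [Group G] (μ : Subgroup G → ℤ) : Prop :=
  ∀ H : Subgroup G, ∑ᶠ K ∈ {K : Subgroup G | H ≤ K}, μ K = if H = ⊤ then 1 else 0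

/-- `B/A` is a chief factor of `G`. -/
def ChiefFactor {G : Type*} [Group G] (A B : Subgroup G) : Prop :=
  A.Normal ∧ B.Normal ∧ A < B ∧
    ∀ N : Subgroup G, N.Normal → A ≤ N → N ≤ B → N = A ∨ N = B

/-- The factor `B/A` is complemented in `G/A`: there is a subgroup `K ≥ A`
with `K ⊔ B = G` and `K ⊓ B = A`. -/
def ComplementedFactor {G : Type*} [Group G] (A B : Subgroup G) : Prop :=
  ∃ K : Subgroup G, A ≤ K ∧ K ⊔ B = ⊤ ∧ K ⊓ B = A

/-- `c` is a chief series of `G`. -/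
def IsChiefSeries {G : Type*} [Group G] {n : ℕ} (c : Fin (n + 1) → Subgroup G) : Prop :=
  c 0 = ⊥ ∧ c (Fin.last n) = ⊤ ∧ ∀ i : Fin n, ChiefFactor (c i.castSucc) (c i.succ)

/-- `N` is a minimal normal subgroup of `G`. -/
def IsMinimalNormal {G : Type*} [Group G] (N : Subgroup G) : Prop :=
  N.Normal ∧ N ≠ ⊥ ∧ ∀ K : Subgroup G, K.Normal → K ≤ N → K = ⊥ ∨ K = N

/-- `F` is the Fitting subgroup of `G`: the largest nilpotent normal subgroup. -/
def IsFitting {G : Type*} [Group G] (F : Subgroup G) : Prop :=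
  F.Normal ∧ Group.IsNilpotent F ∧
    ∀ K : Subgroup G, K.Normal → Group.IsNilpotent K → K ≤ F

/-- The diagonal action of `H` on `V^t`, as a map into the automorphisms of the
(multiplicatively written) group `V^t`. -/
noncomputable def diagPhi (H V : Type*) [Group H] [AddCommGroup V] [DistribMulAction H V]
    (t : ℕ) : H →* MulAut (Multiplicative (Fin t → V)) where
  toFun h := AddEquiv.toMultiplicative (DistribMulAction.toAddAut H (Fin t → V) h)
  map_one' := by
    ext x
    simp [AddEquiv.toMultiplicative, DistribMulAction.toAddAut]
    rfl
  map_mul' h₁ h₂ := by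
    ext x
    simp [AddEquiv.toMultiplicative, DistribMulAction.toAddAut, mul_smul]
    rfl

/-- `G` is an elementary abelian `p`-group for some prime `p`. -/
def IsElementaryAbelian (G : Type*) [Group G] : Prop :=
  ∃ p : ℕ, p.Prime ∧ (∀ a b : G, a * b = b * a) ∧ ∀ g : G, g ^ p = 1

/-- Data exhibiting `G` as `V^t ⋊ H` with `H` cyclic of prime order acting
diagonally via a faithful irreducible action on the finite module `V`. -/
structure VtHData (G : Type*) [Group G] where
  t : ℕ
  H : Type
  V : Type
  [grpH : Group H]
  [acgV : AddCommGroup V]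
  [finV : Finite V]
  [act : DistribMulAction H V]
  [faithful : FaithfulSMul H V]
  card_prime : (Nat.card H).Prime
  nontriv : Nontrivial V
  irred : ∀ W : AddSubgroup V, (∀ (h : H), ∀ v ∈ W, h • v ∈ W) → W = ⊥ ∨ W = ⊤
  iso : Nonempty (G ≃* SemidirectProduct (Multiplicative (Fin t → V)) H (diagPhi H V t))


/-! ### Auxiliary machinery -/

section AlgAux
variable {H V : Type*} [Group H] [AddCommGroup V] [DistribMulAction H V]

/-- The action of `h : H` as an additive endomorphism of `V`. -/
noncomputable def piH (H V : Type*) [Group H] [AddCommGroup V] [DistribMulAction H V] :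
    H → AddMonoid.End V := fun h => DistribMulAction.toAddMonoidEnd H V h

/-- The subring of `End V` generated by the action of `H`. -/
noncomputable def myA (H V : Type*) [Group H] [AddCommGroup V] [DistribMulAction H V] :
    Subring (AddMonoid.End V) := Subring.closure (Set.range (piH H V))

lemma piH_apply (h : H) (v : V) : piH H V h v = h • v := rfl

lemma piH_mul (a b : H) : piH H V (a * b) = piH H V a * piH H V b :=
  map_mul (DistribMulAction.toAddMonoidEnd H V) a b

lemma piH_mem (h : H) : piH H V h ∈ myA H V := Subring.subset_closure ⟨h, rfl⟩

lemma myA_pi_invariant {t : ℕ} (W : AddSubgroup (Fin t → V))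
    (hW : ∀ (h : H), ∀ m ∈ W, h • m ∈ W) {a : AddMonoid.End V} (ha : a ∈ myA H V) :
    ∀ m ∈ W, (fun i => a (m i)) ∈ W := by
  induction ha using Subring.closure_induction with
  | mem x hx =>
    intro m hm
    obtain ⟨h, rfl⟩ := hx
    have h2 := hW h m hm
    convert h2 using 1
    rfl
  | zero => intro m hm; exact W.zero_mem
  | one => intro m hm; simpa using hm
  | add x y hx hy ihx ihy =>
    intro m hm
    have := W.add_mem (ihx m hm) (ihy m hm)
    convert this using 1
    rfl
  | neg x hx ihx =>
    intro m hm
    have := W.neg_mem (ihx m hm)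
    convert this using 1
    rfl
  | mul x y hx hy ihx ihy =>
    intro m hm
    have := ihx _ (ihy m hm)
    convert this using 1
    rfl

lemma myA_comm (hcomm : ∀ a b : H, a * b = b * a) :
    ∀ x ∈ myA H V, ∀ y ∈ myA H V, x * y = y * x := by
  have hrange : ∀ g ∈ Set.range (piH H V), ∀ g' ∈ Set.range (piH H V), g * g' = g' * g := by
    rintro _ ⟨a, rfl⟩ _ ⟨b, rfl⟩
    rw [← piH_mul, ← piH_mul, hcomm]
  have h1 : myA H V ≤ Subring.centralizer (Set.range (piH H V)) :=
    (Subring.closure_le).2 (fun x hx => Subring.mem_centralizer_iff.2 (fun g hg => hrange g hg x hx))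
  have h2 : myA H V ≤ Subring.centralizer (myA H V : Set (AddMonoid.End V)) := by
    show Subring.closure (Set.range (piH H V)) ≤ _
    apply (Subring.closure_le).2
    intro g hg
    rw [SetLike.mem_coe, Subring.mem_centralizer_iff]
    intro x hx
    exact (Subring.mem_centralizer_iff.1 (h1 hx) g hg).symm
  intro x hx y hy
  exact ((Subring.mem_centralizer_iff.1 (h2 hx)) y hy).symm

end AlgAux

section LinAlgAux
variable {K M : Type*} [Field K] [AddCommGroup M] [Module K M]

lemma span_finrank_le_ncard (s : Set M) (hfin : s.Finite) (hsp : Submodule.span K s = ⊤) :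
    Module.finrank K M ≤ s.ncard := by
  haveI := hfin.fintype
  have h1 := finrank_span_le_card (R := K) s
  rw [hsp, finrank_top] at h1
  rwa [Set.ncard_eq_toFinset_card' s]

lemma minimal_span_ncard (s : Set M) (hfin : s.Finite) (hsp : Submodule.span K s = ⊤)
    (hmin : ∀ x ∈ s, Submodule.span K (s \ {x}) ≠ ⊤) :
    s.ncard = Module.finrank K M := by
  obtain ⟨b, hbs, hbsp, hbind⟩ := exists_linearIndependent K s
  have hsb : s = b := by
    apply Set.Subset.antisymm _ hbs
    intro x hx
    by_contra hxb
    apply hmin x hx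
    rw [eq_top_iff, ← hsp, ← hbsp]
    apply Submodule.span_mono
    intro y hy
    exact ⟨hbs hy, fun h => hxb (h ▸ hy)⟩
  subst hsb
  haveI := hfin.fintype
  have hb : Module.Basis s K M := Module.Basis.mk hbind (by rw [Subtype.range_coe, hbsp, hsp])
  rw [Module.finrank_eq_card_basis hb, Set.ncard_eq_toFinset_card' s]
  simp

end LinAlgAux

section GrpAux
variable {H V : Type*} [Group H] [AddCommGroup V] [DistribMulAction H V] {t : ℕ}

open SemidirectProduct Multiplicative

local notation "G'" => SemidirectProduct (Multiplicative (Fin t → V)) H (diagPhi H V t)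

lemma diagPhi_apply (h : H) (n : Multiplicative (Fin t → V)) :
    diagPhi H V t h n = Multiplicative.ofAdd (h • n.toAdd) := rfl

lemma diagPhi_diagPhi (a b : H) (x : Multiplicative (Fin t → V)) :
    diagPhi H V t a (diagPhi H V t b x) = diagPhi H V t (a * b) x := by
  rw [map_mul]; rfl

lemma conj_inl (g : G') (n : Multiplicative (Fin t → V)) :
    g * inl n * g⁻¹ = inl (diagPhi H V t g.right n) := by
  ext
  · simp only [mul_left, mul_right, inv_left, inv_right, left_inl, right_inl, mul_one]
    rw [diagPhi_diagPhi, mul_inv_cancel, map_one, MulAut.one_apply, mul_inv_cancel_comm]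
  · simp [mul_right, inv_right]

lemma eq_inl_of_right_eq_one (x : G') (hx : x.right = 1) : x = inl x.left := by
  conv_lhs => rw [← inl_left_mul_inr_right x]
  rw [hx, map_one, mul_one]

lemma closure_eq_top_of_span
    (S : Set G') (g₁ : G') (hg₁S : g₁ ∈ S)
    (htop : Subgroup.zpowers g₁.right = ⊤)
    (c : G' → ℤ) (hc : ∀ s ∈ S, (s * g₁ ^ (-c s)).right = 1)
    (hspan : AddSubgroup.closure
      (⋃ h : H, (h • ·) '' {m : Fin t → V | ∃ s ∈ S, m = ((s * g₁ ^ (-c s)).left).toAdd}) = ⊤) :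
    Subgroup.closure S = ⊤ := by
  set C := Subgroup.closure S with hC
  have hSC : ∀ s ∈ S, s ∈ C := fun s hs => Subgroup.subset_closure hs
  have hg₁C : g₁ ∈ C := hSC g₁ hg₁S
  let U : AddSubgroup (Fin t → V) :=
    { carrier := {m | (inl (Multiplicative.ofAdd m) : G') ∈ C}
      zero_mem' := by
        show (inl (Multiplicative.ofAdd 0) : G') ∈ C
        simpa using one_mem C
      add_mem' := by
        intro a b ha hb
        show (inl (Multiplicative.ofAdd (a + b)) : G') ∈ C
        rw [ofAdd_add, map_mul]
        exact mul_mem ha hb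
      neg_mem' := by
        intro a ha
        show (inl (Multiplicative.ofAdd (-a)) : G') ∈ C
        rw [ofAdd_neg, map_inv]
        exact inv_mem ha }
  have hr : ∀ m ∈ U, g₁.right • m ∈ U := by
    intro m hm
    have h2 : g₁ * inl (Multiplicative.ofAdd m) * g₁⁻¹ ∈ C :=
      mul_mem (mul_mem hg₁C hm) (inv_mem hg₁C)
    rw [conj_inl, diagPhi_apply] at h2
    exact h2
  have hrinv : ∀ m ∈ U, g₁.right⁻¹ • m ∈ U := by
    intro m hm
    have h2 : g₁⁻¹ * inl (Multiplicative.ofAdd m) * g₁⁻¹⁻¹ ∈ C :=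
      mul_mem (mul_mem (inv_mem hg₁C) hm) (inv_mem (inv_mem hg₁C))
    rw [conj_inl, diagPhi_apply, inv_right] at h2
    exact h2
  have hpow : ∀ (k : ℤ) (m : Fin t → V), m ∈ U → (g₁.right ^ k) • m ∈ U := by
    intro k
    induction k using Int.induction_on with
    | zero => intro m hm; simpa using hm
    | succ k ih =>
      intro m hm
      have h2 := ih (g₁.right • m) (hr m hm)
      rwa [← mul_smul, ← zpow_add_one] at h2
    | pred k ih =>
      intro m hm
      have h2 := ih (g₁.right⁻¹ • m) (hrinv m hm)
      rwa [← mul_smul, ← zpow_sub_one] at h2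
  have hallh : ∀ (h : H) (m : Fin t → V), m ∈ U → h • m ∈ U := by
    intro h m hm
    obtain ⟨k, hk⟩ := Subgroup.mem_zpowers_iff.1 (htop ▸ Subgroup.mem_top h)
    rw [← hk]; exact hpow k m hm
  have hUtop : U = ⊤ := by
    rw [eq_top_iff, ← hspan]
    refine AddSubgroup.closure_le U |>.2 ?_
    rintro x ⟨_, ⟨h, rfl⟩, m, ⟨s, hs, rfl⟩, rfl⟩
    refine hallh h _ ?_
    have hmem : s * g₁ ^ (-c s) ∈ C := mul_mem (hSC s hs) (zpow_mem hg₁C _)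
    rw [eq_inl_of_right_eq_one _ (hc s hs)] at hmem
    show (inl (Multiplicative.ofAdd (((s * g₁ ^ (-c s)).left).toAdd)) : G') ∈ C
    simpa using hmem
  have hinl : ∀ n : Multiplicative (Fin t → V), (inl n : G') ∈ C := by
    intro n
    have h2 : n.toAdd ∈ U := hUtop ▸ AddSubgroup.mem_top n.toAdd
    exact h2
  have hinrg : (inr g₁.right : G') ∈ C := by
    have h1 : (inl g₁.left : G') ∈ C := hinl _
    have h2 : (inl g₁.left)⁻¹ * g₁ ∈ C := mul_mem (inv_mem h1) hg₁C
    have e := inv_mul_cancel_left (inl g₁.left : G') (inr g₁.right)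
    rw [inl_left_mul_inr_right] at e
    rwa [e] at h2
  have hinr : ∀ h : H, (inr h : G') ∈ C := by
    intro h
    obtain ⟨k, hk⟩ := Subgroup.mem_zpowers_iff.1 (htop ▸ Subgroup.mem_top h)
    rw [← hk, map_zpow]
    exact zpow_mem hinrg k
  rw [Subgroup.eq_top_iff']
  intro g
  rw [← inl_left_mul_inr_right g]
  exact mul_mem (hinl _) (hinr _)

lemma span_eq_top_of_closure [Finite V] [FaithfulSMul H V]
    (hcomm : ∀ a b : H, a * b = b * a)
    (hirr : ∀ W : AddSubgroup V, (∀ (h : H), ∀ v ∈ W, h • v ∈ W) → W = ⊥ ∨ W = ⊤)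
    (S : Set G') (g₁ : G') (hg₁ : g₁.right ≠ 1)
    (c : G' → ℤ) (hc : ∀ s ∈ S, (s * g₁ ^ (-c s)).right = 1)
    (W : AddSubgroup (Fin t → V)) (hWinv : ∀ (h : H) (m : Fin t → V), m ∈ W → h • m ∈ W)
    (hWu : ∀ s ∈ S, ((s * g₁ ^ (-c s)).left).toAdd ∈ W)
    (hStop : Subgroup.closure S = ⊤) : W = ⊤ := by
  classical
  let WG : Subgroup G' :=
    { carrier := {g : G' | g.right = 1 ∧ g.left.toAdd ∈ W}
      one_mem' := ⟨rfl, by simpa using W.zero_mem⟩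
      mul_mem' := by
        rintro a b ⟨ha1, ha2⟩ ⟨hb1, hb2⟩
        refine ⟨by rw [mul_right, ha1, hb1, mul_one], ?_⟩
        rw [mul_left, ha1, map_one, MulAut.one_apply]
        simpa using W.add_mem ha2 hb2
      inv_mem' := by
        rintro a ⟨ha1, ha2⟩
        refine ⟨by rw [inv_right, ha1, inv_one], ?_⟩
        rw [inv_left, ha1, inv_one, map_one, MulAut.one_apply]
        simpa using W.neg_mem ha2 }
  have hWGmem : ∀ g : G', g ∈ WG ↔ g.right = 1 ∧ g.left.toAdd ∈ W := fun _ => Iff.rfl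
  haveI hN : WG.Normal := by
    constructor
    rintro n ⟨hn1, hn2⟩ g
    have he : n = inl n.left := by
      conv_lhs => rw [← inl_left_mul_inr_right n]
      rw [hn1, map_one, mul_one]
    rw [he, conj_inl]
    refine ⟨right_inl _, ?_⟩
    rw [left_inl, diagPhi_apply]
    simpa using hWinv g.right n.left.toAdd hn2
  set f := QuotientGroup.mk' WG with hf
  have hfs : ∀ s ∈ S, f s ∈ Subgroup.zpowers (f g₁) := by
    intro s hs
    have hdecomp : s = (s * g₁ ^ (-c s)) * g₁ ^ (c s) := by
      rw [mul_assoc, ← zpow_add, neg_add_cancel, zpow_zero, mul_one]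
    have h1 : f (s * g₁ ^ (-c s)) = 1 := by
      rw [QuotientGroup.mk'_apply, QuotientGroup.eq_one_iff]
      exact ⟨hc s hs, hWu s hs⟩
    have h3 : f s = (f g₁) ^ (c s) := by
      conv_lhs => rw [hdecomp]
      rw [map_mul, h1, one_mul, map_zpow]
    rw [h3]
    exact Subgroup.zpow_mem _ (Subgroup.mem_zpowers (f g₁)) (c s)
  have hsurj : ∀ q : SemidirectProduct (Multiplicative (Fin t → V)) H (diagPhi H V t) ⧸ WG,
      q ∈ Subgroup.zpowers (f g₁) := by
    have hle : Subgroup.closure S ≤ Subgroup.comap f (Subgroup.zpowers (f g₁)) :=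
      (Subgroup.closure_le _).2 fun s hs => hfs s hs
    rw [hStop] at hle
    intro q
    obtain ⟨g, rfl⟩ := QuotientGroup.mk'_surjective WG q
    exact hle (Subgroup.mem_top g)
  have hcommQ : ∀ a b : SemidirectProduct (Multiplicative (Fin t → V)) H (diagPhi H V t) ⧸ WG,
      a * b = b * a := by
    intro a b
    obtain ⟨i, hi⟩ := Subgroup.mem_zpowers_iff.1 (hsurj a)
    obtain ⟨j, hj⟩ := Subgroup.mem_zpowers_iff.1 (hsurj b)
    rw [← hi, ← hj, ← zpow_add, ← zpow_add, add_comm]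
  have hcm : ∀ m : Fin t → V, g₁.right • m - m ∈ W := by
    intro m
    set a : G' := inr g₁.right with ha
    set b : G' := inl (Multiplicative.ofAdd m) with hb
    have h2 : a * b * (b * a)⁻¹ ∈ WG := by
      have h4 : f (a * b * (b * a)⁻¹) = 1 := by
        rw [map_mul, map_inv, map_mul, map_mul, hcommQ (f a) (f b), mul_inv_cancel]
      rwa [QuotientGroup.mk'_apply, QuotientGroup.eq_one_iff] at h4
    have h3 := (hWGmem _).1 h2 |>.2
    have hcompute : (a * b * (b * a)⁻¹).left.toAdd = g₁.right • m - m := by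
      simp only [ha, hb, mul_left, mul_right, inv_left, inv_right, left_inl, right_inl,
        left_inr, right_inr, one_mul, mul_one, map_one, MulAut.one_apply]
      rw [diagPhi_diagPhi, mul_inv_cancel, map_one, MulAut.one_apply]
      simp [diagPhi_apply, sub_eq_add_neg]
    rwa [hcompute] at h3
  have hsurjV : ∀ x : V, ∃ w : V, g₁.right • w - w = x := by
    set r := g₁.right with hr
    let K : AddSubgroup V :=
      { carrier := {v | r • v = v}
        zero_mem' := smul_zero r
        add_mem' := by
          intro x y hx hy
          show r • (x + y) = x + y
          rw [smul_add, hx, hy]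
        neg_mem' := by
          intro x hx
          show r • (-x) = -x
          rw [smul_neg, hx] }
    have hKinv : ∀ (h : H), ∀ v ∈ K, h • v ∈ K := by
      intro h v hv
      show r • (h • v) = h • v
      rw [← mul_smul, hcomm r h, mul_smul, hv]
    have hKne : K ≠ ⊤ := by
      intro hKtop
      apply hg₁
      apply FaithfulSMul.eq_of_smul_eq_smul (α := V)
      intro v
      have hm : v ∈ K := hKtop ▸ AddSubgroup.mem_top v
      rw [one_smul]
      exact hm
    have hKbot : K = ⊥ := (hirr K hKinv).resolve_right hKne
    have hinj : Function.Injective (fun v : V => r • v - v) := by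
      intro x y hxy
      simp only at hxy
      have hK2 : x - y ∈ K := by
        show r • (x - y) = x - y
        rw [smul_sub, sub_eq_sub_iff_add_eq_add]
        have h6 := sub_eq_sub_iff_add_eq_add.1 hxy
        rw [h6, add_comm]
      rw [hKbot, AddSubgroup.mem_bot] at hK2
      exact sub_eq_zero.1 hK2
    have hsurV := Finite.injective_iff_surjective.1 hinj
    intro x
    obtain ⟨w, hw⟩ := hsurV x
    exact ⟨w, hw⟩
  have hsurjM : ∀ x : Fin t → V, ∃ m : Fin t → V, g₁.right • m - m = x := by
    intro x
    refine ⟨fun i => (hsurjV (x i)).choose, ?_⟩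
    funext i
    have := (hsurjV (x i)).choose_spec
    simpa using this
  rw [AddSubgroup.eq_top_iff']
  intro x
  obtain ⟨m, rfl⟩ := hsurjM x
  exact hcm m


lemma main_aux [Finite H] [Finite V] [FaithfulSMul H V] (p : ℕ) (hp : p.Prime)
    (hcard : Nat.card H = p) (hnt : Nontrivial V)
    (hirr : ∀ W : AddSubgroup V, (∀ (h : H), ∀ v ∈ W, h • v ∈ W) → W = ⊥ ∨ W = ⊤) :
    (∃ S : Set G', S.Finite ∧ S.ncard = t + 1 ∧ IrredSet S) ∧
    (∀ S : Set G', S.Finite → Subgroup.closure S = ⊤ → t + 1 ≤ S.ncard) ∧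
    (∀ S : Set G', S.Finite → IrredSet S → S.ncard = t + 1) := by
  classical
  haveI : Fact p.Prime := ⟨hp⟩
  haveI : Nontrivial V := hnt
  haveI hcyc : IsCyclic H := isCyclic_of_prime_card hcard
  have hcomm : ∀ a b : H, a * b = b * a := (IsCyclic.commGroup (α := H)).mul_comm
  haveI hHnt : Nontrivial H := by
    rw [← Finite.one_lt_card_iff_nontrivial, hcard]
    exact hp.one_lt
  have hzpowtop : ∀ r : H, r ≠ 1 → Subgroup.zpowers r = ⊤ := by
    intro r hr
    have h1 : r ^ p = 1 := by rw [← hcard]; exact pow_card_eq_one'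
    have h2 : orderOf r = p := orderOf_eq_prime h1 hr
    apply Subgroup.eq_top_of_card_eq
    rw [Nat.card_zpowers, h2, hcard]
  -- the field `myA H V`
  haveI : Finite (AddMonoid.End V) :=
    Finite.of_injective (fun f => (f : V → V)) DFunLike.coe_injective
  have hAcomm := myA_comm (H := H) (V := V) hcomm
  haveI hFnt : Nontrivial (myA H V) := by
    refine ⟨1, 0, fun h01 => ?_⟩
    obtain ⟨v, hv⟩ := exists_ne (0 : V)
    apply hv
    have h1 := congrArg (fun a : myA H V => (a : AddMonoid.End V) v) h01
    simpa using h1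
  have hker : ∀ a : myA H V, a ≠ 0 → ∀ v : V, (a : AddMonoid.End V) v = 0 → v = 0 := by
    intro a ha
    let K : AddSubgroup V :=
      { carrier := {w | (a : AddMonoid.End V) w = 0}
        zero_mem' := map_zero _
        add_mem' := by
          intro x y hx hy
          simp only [Set.mem_setOf_eq] at hx hy ⊢
          rw [map_add, hx, hy, add_zero]
        neg_mem' := by
          intro x hx
          simp only [Set.mem_setOf_eq] at hx ⊢
          rw [map_neg, hx, neg_zero] }
    have hKinv : ∀ (h : H), ∀ w ∈ K, h • w ∈ K := by
      intro h w hw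
      have hw' : (a : AddMonoid.End V) w = 0 := hw
      show (a : AddMonoid.End V) (h • w) = 0
      have hcom := hAcomm (a : AddMonoid.End V) a.2 (piH H V h) (piH_mem h)
      have h3 : (a : AddMonoid.End V) (piH H V h w) = piH H V h ((a : AddMonoid.End V) w) :=
        congrArg (fun f : AddMonoid.End V => f w) hcom
      rw [show (h • w : V) = piH H V h w from rfl, h3, hw', map_zero]
    have hKne : K ≠ ⊤ := by
      intro hKtop
      apply ha
      apply Subtype.ext
      apply AddMonoidHom.ext
      intro w
      exact (hKtop ▸ AddSubgroup.mem_top w : w ∈ K)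
    have hKbot := (hirr K hKinv).resolve_right hKne
    intro v hv
    have hvK : v ∈ K := hv
    rw [hKbot] at hvK
    exact AddSubgroup.mem_bot.1 hvK
  letI : CommRing (myA H V) :=
    { (inferInstance : Ring (myA H V)) with
      mul_comm := fun a b => Subtype.ext (hAcomm a.1 a.2 b.1 b.2) }
  haveI : NoZeroDivisors (myA H V) := by
    constructor
    intro a b hab
    by_cases ha : a = 0
    · exact Or.inl ha
    · refine Or.inr (Subtype.ext (AddMonoidHom.ext fun v => ?_))
      have h1 : (a : AddMonoid.End V) ((b : AddMonoid.End V) v) = 0 :=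
        congrArg (fun x : myA H V => (x : AddMonoid.End V) v) hab
      exact hker a ha _ h1
  haveI : IsDomain (myA H V) := NoZeroDivisors.to_isDomain _
  letI : Field (myA H V) := (Finite.isField_of_domain _).toField
  -- submodules are invariant
  have hsubmod_invV : ∀ (U : Submodule (myA H V) V) (h : H) (v : V), v ∈ U → h • v ∈ U := by
    intro U h v hv
    exact (U.smul_mem (⟨piH H V h, piH_mem h⟩ : myA H V) hv : _)
  have hsubmod_inv : ∀ (U : Submodule (myA H V) (Fin t → V)) (h : H) (m : Fin t → V),
      m ∈ U → h • m ∈ U := by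
    intro U h m hm
    exact (U.smul_mem (⟨piH H V h, piH_mem h⟩ : myA H V) hm : _)
  -- invariant closure of a spanning set is everything
  have hinv_closure_span : ∀ X : Set (Fin t → V), Submodule.span (myA H V) X = ⊤ →
      AddSubgroup.closure (⋃ h : H, (h • ·) '' X) = ⊤ := by
    intro X hX
    set cl := AddSubgroup.closure (⋃ h : H, (h • ·) '' X) with hcl
    have hclinv : ∀ (hh : H), ∀ m ∈ cl, hh • m ∈ cl := by
      intro hh m hm
      have hle : cl ≤ AddSubgroup.comap (DistribMulAction.toAddMonoidHom (Fin t → V) hh) cl := by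
        rw [hcl]
        refine (AddSubgroup.closure_le _).2 ?_
        intro x hx
        simp only [Set.mem_iUnion, Set.mem_image] at hx
        obtain ⟨h1, y, hy, rfl⟩ := hx
        show hh • (h1 • y) ∈ cl
        rw [← mul_smul]
        apply AddSubgroup.subset_closure
        simp only [Set.mem_iUnion, Set.mem_image]
        exact ⟨hh * h1, y, hy, rfl⟩
      exact hle hm
    let Z : Submodule (myA H V) (Fin t → V) :=
      { carrier := cl
        add_mem' := fun ha hb => cl.add_mem ha hb
        zero_mem' := cl.zero_mem
        smul_mem' := by
          intro a m hm
          exact (myA_pi_invariant cl hclinv a.2 m hm : _) }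
    have hZ : Submodule.span (myA H V) X ≤ Z := Submodule.span_le.2 (fun x hx => by
      apply AddSubgroup.subset_closure
      simp only [Set.mem_iUnion, Set.mem_image]
      exact ⟨1, x, hx, one_smul H x⟩)
    rw [hX] at hZ
    rw [AddSubgroup.eq_top_iff']
    intro m
    exact hZ Submodule.mem_top
  -- a nonzero vector spans V
  obtain ⟨v₀, hv₀⟩ := exists_ne (0 : V)
  have hV1 : Submodule.span (myA H V) {v₀} = ⊤ := by
    set W := (Submodule.span (myA H V) {v₀}).toAddSubgroup with hWdef
    have hWinv : ∀ (h : H), ∀ v ∈ W, h • v ∈ W := fun h v hv => hsubmod_invV _ h v hv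
    rcases hirr W hWinv with hbot | htop
    · exfalso
      apply hv₀
      have hmem : v₀ ∈ W := Submodule.mem_span_singleton_self v₀
      rw [hbot] at hmem
      exact AddSubgroup.mem_bot.1 hmem
    · rw [Submodule.eq_top_iff']
      intro v
      exact (htop ▸ AddSubgroup.mem_top v : v ∈ W)
  have hVall : ∀ w : V, ∃ a : myA H V, a • v₀ = w := by
    intro w
    have hmem : w ∈ Submodule.span (myA H V) {v₀} := hV1 ▸ Submodule.mem_top
    exact Submodule.mem_span_singleton.1 hmem
  -- the standard "basis" of `Fin t → V`
  set e : Fin t → (Fin t → V) := fun i => Pi.single i v₀ with he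
  have he_same : ∀ i, e i i = v₀ := by
    intro i
    rw [he]
    exact Pi.single_eq_same (M := fun _ : Fin t => V) i v₀
  have he_ne : ∀ i j, j ≠ i → e i j = 0 := by
    intro i j hij
    rw [he]
    exact Pi.single_eq_of_ne (M := fun _ : Fin t => V) hij v₀
  have heinj : Function.Injective e := by
    intro i j hij
    by_contra hne
    apply hv₀
    have h1 := congrFun hij i
    rw [he_same, he_ne j i hne] at h1
    exact h1
  have hespan : Submodule.span (myA H V) (Set.range e) = ⊤ := by
    rw [Submodule.eq_top_iff']
    intro x
    have hx : x = ∑ i, Pi.single i (x i) := by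
      funext j
      rw [Finset.sum_apply]
      simp [Pi.single_apply]
    rw [hx]
    apply Submodule.sum_mem
    intro i _
    obtain ⟨a, ha⟩ := hVall (x i)
    have h2 : Pi.single i (x i) = a • e i := by
      rw [← ha, he]
      exact Pi.single_smul (f := fun _ : Fin t => V) i a v₀
    rw [h2]
    exact Submodule.smul_mem _ a (Submodule.subset_span ⟨i, rfl⟩)
  have heindep : LinearIndependent (myA H V) e := by
    rw [Fintype.linearIndependent_iff]
    intro c hc j
    have h1 := congrFun hc j
    rw [Finset.sum_apply] at h1
    have h2 : ∀ i, (c i • e i) j = if i = j then c j • v₀ else 0 := by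
      intro i
      by_cases hij : i = j
      · subst hij
        simp [he_same]
      · simp [hij, he_ne i j (fun h => hij h.symm)]
    rw [Finset.sum_congr rfl (fun i _ => h2 i)] at h1
    simp only [Finset.sum_ite_eq', Finset.mem_univ, if_true] at h1
    by_contra hcj
    apply hv₀
    have h3 := congrArg (fun z => (c j)⁻¹ • z) h1
    simpa [inv_smul_smul₀ hcj] using h3
  have hbasis : Module.Basis (Fin t) (myA H V) (Fin t → V) := Module.Basis.mk heindep (by rw [hespan])
  have hfinrank : Module.finrank (myA H V) (Fin t → V) = t := by
    rw [Module.finrank_eq_card_basis hbasis, Fintype.card_fin]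
  have he_notmem : ∀ i, e i ∉ Submodule.span (myA H V) (Set.range e \ {e i}) := by
    intro i hmem
    have hle : Submodule.span (myA H V) (Set.range e \ {e i}) ≤
        LinearMap.ker (LinearMap.proj (R := myA H V) (φ := fun _ : Fin t => V) i) := by
      rw [Submodule.span_le]
      rintro x ⟨⟨j, rfl⟩, hx2⟩
      have hji : j ≠ i := by
        intro h
        subst h
        exact hx2 rfl
      simp only [SetLike.mem_coe, LinearMap.mem_ker, LinearMap.proj_apply]
      exact he_ne j i (Ne.symm hji)
    have h4 := hle hmem
    rw [LinearMap.mem_ker, LinearMap.proj_apply] at h4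
    apply hv₀
    rw [← he_same i]
    exact h4
  -- group-level helpers
  have hNproper : ∀ T : Set G', (∀ x ∈ T, x.right = 1) → Subgroup.closure T ≠ ⊤ := by
    intro T hT htop
    obtain ⟨h₀, hh₀⟩ := exists_ne (1 : H)
    have hle : Subgroup.closure T ≤ MonoidHom.ker (rightHom (φ := diagPhi H V t)) := by
      refine (Subgroup.closure_le _).2 ?_
      intro x hx
      rw [SetLike.mem_coe, MonoidHom.mem_ker]
      show x.right = 1
      exact hT x hx
    rw [htop] at hle
    have h2 : rightHom (inr h₀ : G') = 1 := hle (Subgroup.mem_top _)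
    rw [rightHom_inr] at h2
    exact hh₀ h2
  have hzpow_right : ∀ (g : G') (k : ℤ), (g ^ k).right = g.right ^ k := by
    intro g k
    exact map_zpow (rightHom (φ := diagPhi H V t)) g k
  have hpivotc : ∀ g₁ : G', g₁.right ≠ 1 →
      ∃ c : G' → ℤ, c g₁ = 1 ∧ ∀ g : G', (g * g₁ ^ (-c g)).right = 1 := by
    intro g₁ hg₁
    have hcex : ∀ g : G', ∃ k : ℤ, g₁.right ^ k = g.right := fun g =>
      Subgroup.mem_zpowers_iff.1 ((hzpowtop _ hg₁) ▸ Subgroup.mem_top _)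
    refine ⟨fun g => if g = g₁ then 1 else (hcex g).choose, if_pos rfl, ?_⟩
    intro g
    rw [mul_right, hzpow_right]
    beta_reduce
    by_cases hgg : g = g₁
    · subst hgg
      simp only [↓reduceIte]
      rw [zpow_neg, zpow_one, mul_inv_cancel]
    · simp only [if_neg hgg]
      obtain ⟨k, hgenk, hk⟩ : ∃ k, (hcex g).choose = k ∧ g₁.right ^ k = g.right :=
        ⟨_, rfl, (hcex g).choose_spec⟩
      rw [hgenk, ← hk, ← zpow_add, add_neg_cancel, zpow_zero]
  have hspan_of_closure : ∀ (S : Set G') (g₁ : G'), g₁.right ≠ 1 → ∀ c : G' → ℤ,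
      (∀ g : G', (g * g₁ ^ (-c g)).right = 1) →
      Subgroup.closure S = ⊤ →
      Submodule.span (myA H V) ((fun s => ((s * g₁ ^ (-c s)).left).toAdd) '' S) = ⊤ := by
    intro S g₁ hg₁ c hc hcl
    set W := (Submodule.span (myA H V)
      ((fun s => ((s * g₁ ^ (-c s)).left).toAdd) '' S)).toAddSubgroup with hW
    have h1 := span_eq_top_of_closure hcomm hirr S g₁ hg₁ c (fun s _ => hc s) W
      (fun h m hm => hsubmod_inv _ h m hm)
      (fun s hs => Submodule.subset_span (Set.mem_image_of_mem _ hs)) hcl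
    rw [Submodule.eq_top_iff']
    intro m
    exact (h1 ▸ AddSubgroup.mem_top m : m ∈ W)
  have himgset : ∀ (S : Set G') (g₁ : G') (c : G' → ℤ),
      {m : Fin t → V | ∃ s ∈ S, m = ((s * g₁ ^ (-c s)).left).toAdd}
        = (fun s => ((s * g₁ ^ (-c s)).left).toAdd) '' S := by
    intro S g₁ c
    ext m
    simp only [Set.mem_setOf_eq, Set.mem_image]
    constructor
    · rintro ⟨s, hs, rfl⟩; exact ⟨s, hs, rfl⟩
    · rintro ⟨s, hs, rfl⟩; exact ⟨s, hs, rfl⟩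
  have hclosure_of_span : ∀ (S : Set G') (g₁ : G'), g₁ ∈ S → g₁.right ≠ 1 → ∀ c : G' → ℤ,
      (∀ g : G', (g * g₁ ^ (-c g)).right = 1) →
      Submodule.span (myA H V) ((fun s => ((s * g₁ ^ (-c s)).left).toAdd) '' S) = ⊤ →
      Subgroup.closure S = ⊤ := by
    intro S g₁ hg₁S hg₁ c hc hsp
    apply closure_eq_top_of_span S g₁ hg₁S (hzpowtop _ hg₁) c (fun s _ => hc s)
    rw [himgset S g₁ c]
    exact hinv_closure_span _ hsp
  have hu_g₁ : ∀ (g₁ : G') (c : G' → ℤ), c g₁ = 1 →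
      ((g₁ * g₁ ^ (-c g₁)).left).toAdd = 0 := by
    intro g₁ c hcg
    rw [hcg, zpow_neg, zpow_one, mul_inv_cancel, one_left, toAdd_one]
  -- KEY 1 : lower bound for generating sets
  have key1 : ∀ S : Set G', S.Finite → Subgroup.closure S = ⊤ → t + 1 ≤ S.ncard := by
    intro S hSfin hScl
    have hex : ∃ g₁ ∈ S, g₁.right ≠ 1 := by
      by_contra hno
      push_neg at hno
      exact hNproper S hno hScl
    obtain ⟨g₁, hg₁S, hg₁⟩ := hex
    obtain ⟨c, hcg₁, hc⟩ := hpivotc g₁ hg₁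
    set u : G' → (Fin t → V) := fun s => ((s * g₁ ^ (-c s)).left).toAdd with hu
    have hsp : Submodule.span (myA H V) (u '' S) = ⊤ := hspan_of_closure S g₁ hg₁ c hc hScl
    have hSsplit : S = insert g₁ (S \ {g₁}) := by
      rw [Set.insert_diff_singleton]
      exact (Set.insert_eq_self.2 hg₁S).symm
    have hug1 : u g₁ = 0 := by
      rw [hu]
      exact hu_g₁ g₁ c hcg₁
    have hsp2 : Submodule.span (myA H V) (u '' (S \ {g₁})) = ⊤ := by
      rw [hSsplit, Set.image_insert_eq] at hsp
      rw [hug1] at hsp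
      rwa [Submodule.span_insert_zero] at hsp
    have hcount := span_finrank_le_ncard (K := myA H V) _ (hSfin.diff.image u) hsp2
    rw [hfinrank] at hcount
    have h5 : (u '' (S \ {g₁})).ncard ≤ (S \ {g₁}).ncard :=
      Set.ncard_image_le hSfin.diff
    have h6 : (S \ {g₁}).ncard = S.ncard - 1 :=
      Set.ncard_diff_singleton_of_mem hg₁S
    have h7 : 0 < S.ncard := (Set.ncard_pos hSfin).2 ⟨g₁, hg₁S⟩
    omega
  -- KEY 2 : every finite irredundant generating set has exactly t+1 elements
  have key2 : ∀ S : Set G', S.Finite → IrredSet S → S.ncard = t + 1 := by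
    intro S hSfin hSirr
    obtain ⟨hScl, hSmin⟩ := hSirr
    have hex : ∃ g₁ ∈ S, g₁.right ≠ 1 := by
      by_contra hno
      push_neg at hno
      exact hNproper S hno hScl
    obtain ⟨g₁, hg₁S, hg₁⟩ := hex
    obtain ⟨c, hcg₁, hc⟩ := hpivotc g₁ hg₁
    set u : G' → (Fin t → V) := fun s => ((s * g₁ ^ (-c s)).left).toAdd with hu
    have hsp : Submodule.span (myA H V) (u '' S) = ⊤ := hspan_of_closure S g₁ hg₁ c hc hScl
    have hSsplit : S = insert g₁ (S \ {g₁}) := by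
      rw [Set.insert_diff_singleton]
      exact (Set.insert_eq_self.2 hg₁S).symm
    have hug1 : u g₁ = 0 := by
      rw [hu]
      exact hu_g₁ g₁ c hcg₁
    have hsp2 : Submodule.span (myA H V) (u '' (S \ {g₁})) = ⊤ := by
      rw [hSsplit, Set.image_insert_eq] at hsp
      rw [hug1] at hsp
      rwa [Submodule.span_insert_zero] at hsp
    have hgen' : ∀ s ∈ S, s ≠ g₁ →
        Submodule.span (myA H V) (u '' (S \ {s})) = ⊤ → False := by
      intro s hs hne hspan'
      apply hSmin s hs
      exact hclosure_of_span (S \ {s}) g₁ ⟨hg₁S, fun h => hne (Set.mem_singleton_iff.1 h).symm⟩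
        hg₁ c hc hspan'
    set X := u '' (S \ {g₁}) with hX
    have hXfin : X.Finite := hSfin.diff.image u
    have hXmin : ∀ x ∈ X, Submodule.span (myA H V) (X \ {x}) ≠ ⊤ := by
      rintro x ⟨s, hsT, rfl⟩ hcontra
      refine hgen' s hsT.1 (fun h => hsT.2 (by rw [h]; rfl)) ?_
      rw [eq_top_iff, ← hcontra]
      apply Submodule.span_mono
      rintro y ⟨⟨s', hs'T, rfl⟩, hyne⟩
      refine ⟨s', ⟨hs'T.1, fun hss => ?_⟩, rfl⟩
      apply hyne
      rw [Set.mem_singleton_iff.1 hss]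
      rfl
    have hXcard := minimal_span_ncard X hXfin hsp2 hXmin
    rw [hfinrank] at hXcard
    have hUinj : Set.InjOn u (S \ {g₁}) := by
      intro a ha b hb hab
      by_contra hne
      refine hgen' a ha.1 (fun h => ha.2 (by rw [h]; rfl)) ?_
      rw [eq_top_iff, ← hsp2]
      apply Submodule.span_mono
      rintro y ⟨s', hs', rfl⟩
      by_cases h' : s' = a
      · subst h'
        refine ⟨b, ⟨hb.1, fun hba => hne ?_⟩, hab.symm⟩
        rw [Set.mem_singleton_iff.1 hba]
      · exact ⟨s', ⟨hs'.1, h'⟩, rfl⟩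
    have h8 : (S \ {g₁}).ncard = X.ncard := (Set.ncard_image_of_injOn hUinj).symm
    have h6 : (S \ {g₁}).ncard = S.ncard - 1 :=
      Set.ncard_diff_singleton_of_mem hg₁S
    have h7 : 0 < S.ncard := (Set.ncard_pos hSfin).2 ⟨g₁, hg₁S⟩
    omega
  -- KEY 3 : existence of an irredundant generating set of size t+1
  have key3 : ∃ S : Set G', S.Finite ∧ S.ncard = t + 1 ∧ IrredSet S := by
    obtain ⟨h₀, hh₀⟩ := exists_ne (1 : H)
    set gH : G' := inr h₀ with hgH
    set gE : Fin t → G' := fun i => inl (Multiplicative.ofAdd (e i)) with hgE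
    set S₀ : Set G' := insert gH (Set.range gE) with hS₀
    have hgHr : gH.right = h₀ := rfl
    have hgHr1 : gH.right ≠ 1 := by rw [hgHr]; exact hh₀
    have hgEr : ∀ i, (gE i).right = 1 := fun i => right_inl _
    have hgEne : ∀ i, gE i ≠ gH := by
      intro i hEq
      apply hh₀
      have h2 := congrArg SemidirectProduct.right hEq
      rw [hgEr] at h2
      exact h2.symm
    have hgEinj : Function.Injective gE := by
      intro i j hij
      apply heinj
      have h2 := congrArg (fun g : G' => (SemidirectProduct.left g).toAdd) hij
      simpa [hgE] using h2
    obtain ⟨c, hcgH, hc⟩ := hpivotc gH hgHr1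
    set u : G' → (Fin t → V) := fun s => ((s * gH ^ (-c s)).left).toAdd with hu
    have hugH : u gH = 0 := by
      rw [hu]
      exact hu_g₁ gH c hcgH
    have hu_one : ∀ s : G', s.right = 1 → u s = s.left.toAdd := by
      intro s hs
      have h1 := hc s
      rw [mul_right, hs, one_mul, hzpow_right, hgHr] at h1
      -- h1 : h₀ ^ (-c s) = 1
      have h2 : gH ^ (-c s) = 1 := by
        rw [hgH, ← map_zpow, h1, map_one]
      rw [hu]
      show ((s * gH ^ (-c s)).left).toAdd = s.left.toAdd
      rw [h2, mul_one]
    have huE : ∀ i, u (gE i) = e i := by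
      intro i
      rw [hu_one (gE i) (hgEr i)]
      simp only [hgE, left_inl, toAdd_ofAdd]
    have himg : u '' S₀ = insert 0 (Set.range e) := by
      rw [hS₀, Set.image_insert_eq, hugH]
      congr 1
      rw [← Set.range_comp]
      exact congrArg Set.range (funext huE)
    have hS₀gen : Subgroup.closure S₀ = ⊤ := by
      apply hclosure_of_span S₀ gH (Set.mem_insert _ _) hgHr1 c hc
      show Submodule.span (myA H V) (u '' S₀) = ⊤
      rw [himg, Submodule.span_insert_zero, hespan]
    have hS₀fin : S₀.Finite := (Set.finite_range gE).insert gH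
    have hgHnotmem : gH ∉ Set.range gE := by
      rintro ⟨i, hi⟩
      exact hgEne i hi
    have hS₀card : S₀.ncard = t + 1 := by
      rw [hS₀, Set.ncard_insert_of_notMem hgHnotmem (Set.finite_range gE)]
      congr 1
      rw [← Set.image_univ, Set.ncard_image_of_injOn (hgEinj.injOn), Set.ncard_univ,
        Nat.card_eq_fintype_card, Fintype.card_fin]
    refine ⟨S₀, hS₀fin, hS₀card, hS₀gen, ?_⟩
    intro x hx
    rcases hx with rfl | ⟨i, rfl⟩
    · -- removing gH
      apply hNproper
      rintro y ⟨hy1, hy2⟩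
      rcases hy1 with rfl | ⟨i, rfl⟩
      · exact absurd rfl hy2
      · exact hgEr i
    · -- removing gE i
      intro hcl
      set W := (Submodule.span (myA H V) (Set.range e \ {e i})).toAddSubgroup with hW
      have hWtop := span_eq_top_of_closure hcomm hirr (S₀ \ {gE i}) gH hgHr1 c
        (fun s _ => hc s) W (fun h m hm => hsubmod_inv _ h m hm) ?_ hcl
      · apply he_notmem i
        have hmem : e i ∈ W := hWtop ▸ AddSubgroup.mem_top (e i)
        exact hmem
      · rintro s ⟨hs1, hs2⟩
        rcases hs1 with rfl | ⟨j, rfl⟩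
        · show u gH ∈ W
          rw [hugH]
          exact W.zero_mem
        · show u (gE j) ∈ W
          rw [huE j]
          have hji : e j ≠ e i := by
            intro hEq
            apply hs2
            rw [heinj hEq]
            rfl
          exact Submodule.subset_span ⟨⟨j, rfl⟩, hji⟩
  exact ⟨key3, key1, key2⟩

end GrpAux

theorem dGen_and_mIrr_of_VtH
    (H V : Type*) [Group H] [AddCommGroup V] [Finite H] [Finite V]
    [DistribMulAction H V] [FaithfulSMul H V] (p t : ℕ) (hp : p.Prime)
    (hcard : Nat.card H = p) (hnt : Nontrivial V)
    (hirr : ∀ W : AddSubgroup V, (∀ (h : H), ∀ v ∈ W, h • v ∈ W) → W = ⊥ ∨ W = ⊤) :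
    dGen (SemidirectProduct (Multiplicative (Fin t → V)) H (diagPhi H V t)) = t + 1 ∧
    mIrr (SemidirectProduct (Multiplicative (Fin t → V)) H (diagPhi H V t)) = t + 1 ∧
    ∀ s : Set (SemidirectProduct (Multiplicative (Fin t → V)) H (diagPhi H V t)),
      s.Finite → IrredSet s → s.ncard = t + 1 := by
  classical
  obtain ⟨⟨S₀, hS₀fin, hS₀card, hS₀irr⟩, key1, key2⟩ :=
    main_aux (t := t) p hp hcard hnt hirr
  refine ⟨?_, ?_, fun s hfin hirrS => key2 s hfin hirrS⟩
  · show sInf {n | ∃ s : Set (SemidirectProduct (Multiplicative (Fin t → V)) H (diagPhi H V t)),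
      s.Finite ∧ s.ncard = n ∧ Subgroup.closure s = ⊤} = t + 1
    apply le_antisymm
    · exact Nat.sInf_le ⟨S₀, hS₀fin, hS₀card, hS₀irr.1⟩
    · refine le_csInf ⟨t + 1, ⟨S₀, hS₀fin, hS₀card, hS₀irr.1⟩⟩ ?_
      rintro n ⟨s, hsfin, rfl, hscl⟩
      exact key1 s hsfin hscl
  · show sSup {n | ∃ s : Set (SemidirectProduct (Multiplicative (Fin t → V)) H (diagPhi H V t)),
      s.Finite ∧ s.ncard = n ∧ IrredSet s} = t + 1
    have hset : {n | ∃ s : Set (SemidirectProduct (Multiplicative (Fin t → V)) H (diagPhi H V t)),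
        s.Finite ∧ s.ncard = n ∧ IrredSet s} = {t + 1} := by
      ext n
      simp only [Set.mem_setOf_eq, Set.mem_singleton_iff]
      constructor
      · rintro ⟨s, hsfin, rfl, hsirr⟩
        exact key2 s hsfin hsirr
      · rintro rfl
        exact ⟨S₀, hS₀fin, hS₀card, hS₀irr⟩
    rw [hset, csSup_singleton]
end

section
/- Let G be a finite soluble group with trivial Frattini subgroup, let F = N_1 × ... × N_t be the Fitting subgroup written as a direct product of t minimal normal subgroups, and let H be a complement of F in G. If for each i, y_i is a nontrivial element of N_i and {x_1,...,x_μ} is an irredundant generating sequence of H, then {y_1,...,y_t,x_1,...,x_μ} is an irredundant generating sequence of G. -/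
open Subgroup
open scoped Classical Pointwise
open scoped commutatorElement

lemma perfect_eq_bot' {G : Type*} [Group G] [Group.IsSolvable G] {K : Subgroup G}
    (h : ⁅K, K⁆ = K) : K = ⊥ := by
  obtain ⟨n, hn⟩ := Group.IsSolvable.solvable (G := G)
  have key : ∀ n, K ≤ derivedSeries G n := by
    intro n
    induction n with
    | zero => exact le_top
    | succ n ih =>
        rw [derivedSeries_succ]
        calc K = ⁅K, K⁆ := h.symm
        _ ≤ ⁅derivedSeries G n, derivedSeries G n⁆ := Subgroup.commutator_mono ih ih
  exact le_bot_iff.mp (hn ▸ key n)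

theorem irredSeq_append_of_fitting_complement
    (G : Type*) [Group G] [Finite G] [Group.IsSolvable G] (hfr : frattini G = ⊥)
    (F : Subgroup G) (hF : IsFitting F) {t : ℕ} (N : Fin t → Subgroup G)
    (hmin : ∀ i, IsMinimalNormal (N i)) (hind : iSupIndep N) (hsup : ⨆ i, N i = F)
    (H : Subgroup G) (hcompl : H ⊔ F = ⊤ ∧ H ⊓ F = ⊥)
    (y : Fin t → G) (hy : ∀ i, y i ∈ N i) (hy1 : ∀ i, y i ≠ 1)
    {m : ℕ} (x : Fin m → G) (hxH : ∀ i, x i ∈ H)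
    (hxgen : Subgroup.closure (Set.range x) = H)
    (hxirr : ∀ i : Fin m, Subgroup.closure (x '' {i}ᶜ) ≠ H) :
    IrredSeq (Fin.append y x) := by
  obtain ⟨hHF, hHFbot⟩ := hcompl
  haveI hFnormal : F.Normal := hF.1
  have hNF : ∀ i, N i ≤ F := fun i => hsup ▸ le_iSup N i
  have hNnormal : ∀ i, (N i).Normal := fun i => (hmin i).1
  -- elements of distinct (or same) minimal normals commute
  have hcommNN : ∀ i j, ∀ a ∈ N i, ∀ b ∈ N j, a * b = b * a := by
    intro i j a ha b hb
    haveI := hNnormal i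
    haveI := hNnormal j
    rcases eq_or_ne i j with rfl | hij
    · have hbot : ⁅N i, N i⁆ = ⊥ := by
        rcases (hmin i).2.2 ⁅N i, N i⁆ inferInstance (Subgroup.commutator_le_left (N i) (N i)) with h | h
        · exact h
        · exact absurd (perfect_eq_bot' h) (hmin i).2.1
      have : ⁅a, b⁆ ∈ (⊥ : Subgroup G) := hbot ▸ Subgroup.commutator_mem_commutator ha hb
      exact commutatorElement_eq_one_iff_mul_comm.mp (Subgroup.mem_bot.mp this)
    · have hNij : N i ⊓ N j = ⊥ := by
        have h1 : N j ≤ ⨆ k, ⨆ _ : k ≠ i, N k :=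
          le_iSup_of_le j (le_iSup_of_le (Ne.symm hij) le_rfl)
        exact disjoint_iff.mp ((hind i).mono_right h1)
      have : ⁅a, b⁆ ∈ (⊥ : Subgroup G) := by
        rw [← hNij]
        exact le_inf (Subgroup.commutator_le_left (N i) (N j)) (Subgroup.commutator_le_right (N i) (N j))
          (Subgroup.commutator_mem_commutator ha hb)
      exact commutatorElement_eq_one_iff_mul_comm.mp (Subgroup.mem_bot.mp this)
  -- F centralizes each y i
  have hFcent : ∀ i, ∀ f ∈ F, f * y i = y i * f := by
    intro i f hf
    rw [← hsup] at hf
    refine Subgroup.iSup_induction N (C := fun f => f * y i = y i * f) hf ?_ (by group) ?_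
    · intro j b hb
      exact (hcommNN i j (y i) (hy i) b hb).symm
    · intro a b hab hbb
      rw [mul_assoc, hbb, ← mul_assoc, hab, mul_assoc]
  set S := Subgroup.closure (Set.range (Fin.append y x)) with hS
  have hyS : ∀ i, y i ∈ S := fun i =>
    subset_closure ⟨Fin.castAdd m i, Fin.append_left y x i⟩
  have hxS : ∀ i, x i ∈ S := fun i =>
    subset_closure ⟨Fin.natAdd t i, Fin.append_right y x i⟩
  have hHS : H ≤ S := by
    rw [← hxgen]
    refine (Subgroup.closure_le S).mpr ?_
    rintro z ⟨i, rfl⟩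
    exact hxS i
  have hNS : ∀ i, N i ≤ S := by
    intro i
    haveI := hNnormal i
    have hncl : Subgroup.normalClosure ({y i} : Set G) = N i := by
      rcases (hmin i).2.2 _ Subgroup.normalClosure_normal
          (Subgroup.normalClosure_le_normal (Set.singleton_subset_iff.mpr (hy i))) with h | h
      · exact absurd h (by
          intro hb
          exact hy1 i (Subgroup.mem_bot.mp (hb ▸ Subgroup.subset_normalClosure rfl)))
      · exact h
    rw [← hncl]
    show Subgroup.closure (Group.conjugatesOfSet ({y i} : Set G)) ≤ S
    refine (Subgroup.closure_le S).mpr ?_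
    intro z hz
    obtain ⟨a, ha, hconj⟩ := Group.mem_conjugatesOfSet_iff.mp hz
    rw [Set.mem_singleton_iff] at ha
    subst ha
    obtain ⟨c, rfl⟩ := isConj_iff.mp hconj
    have hc : c ∈ (↑H * ↑F : Set G) := by
      rw [← Subgroup.mul_normal H F, hHF]; trivial
    obtain ⟨h, hh, f, hf, rfl⟩ := hc
    have hfy : f * y i * f⁻¹ = y i := by rw [hFcent i f hf]; group
    have : h * f * y i * (h * f)⁻¹ = h * y i * h⁻¹ := by
      rw [mul_inv_rev, show h * f * y i * (f⁻¹ * h⁻¹) = h * (f * y i * f⁻¹) * h⁻¹ by group,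
        hfy]
    rw [this]
    exact S.mul_mem (S.mul_mem (hHS hh) (hyS _)) (S.inv_mem (hHS hh))
  have hFS : F ≤ S := by rw [← hsup]; exact iSup_le hNS
  constructor
  · rw [← hS, eq_top_iff, ← hHF]
    exact sup_le hHS hFS
  · intro i
    refine Fin.addCases (motive := fun i =>
        Subgroup.closure (Fin.append y x '' {i}ᶜ) ≠ ⊤) ?_ ?_ i
    · -- removing y j
      intro j htop
      set Fj : Subgroup G := ⨆ k : {k : Fin t // k ≠ j}, N k.1 with hFj
      have hFjeq : (⨆ k, ⨆ _ : k ≠ j, N k) = Fj := iSup_subtype'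
      have hFjF : Fj ≤ F := iSup_le fun k => hNF k.1
      haveI hFjnormal : Fj.Normal := by
        constructor
        intro a ha g
        refine Subgroup.iSup_induction (fun k : {k : Fin t // k ≠ j} => N k.1)
          (C := fun a => g * a * g⁻¹ ∈ Fj) ha ?_ (by simpa using Subgroup.one_mem Fj) ?_
        · intro k b hb
          exact le_iSup (fun k : {k : Fin t // k ≠ j} => N k.1) k
            ((hNnormal k.1).conj_mem b hb g)
        · intro u v hu hv
          have hmul : g * (u * v) * g⁻¹ = (g * u * g⁻¹) * (g * v * g⁻¹) := by group
          rw [hmul]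
          exact Subgroup.mul_mem _ hu hv
      have hsub : Subgroup.closure (Fin.append y x '' {Fin.castAdd m j}ᶜ) ≤ Fj ⊔ H := by
        refine (Subgroup.closure_le _).mpr ?_
        rintro z ⟨k, hk, rfl⟩
        refine Fin.addCases (motive := fun k => k ∈ ({Fin.castAdd m j}ᶜ : Set _) →
          Fin.append y x k ∈ ↑(Fj ⊔ H)) ?_ ?_ k hk
        · intro k' hk'
          rw [Fin.append_left]
          have hne : k' ≠ j := fun h => hk' (by simp [h])
          exact le_sup_left (a := Fj) (b := H)
            (le_iSup (fun k : {k : Fin t // k ≠ j} => N k.1) ⟨k', hne⟩ (hy k'))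
        · intro k' _
          rw [Fin.append_right]
          exact le_sup_right (a := Fj) (b := H) (hxH k')
      have hFjH : Fj ⊔ H = ⊤ := top_unique (htop ▸ hsub)
      have hNjbot : y j ∈ (⊥ : Subgroup G) := by
        have hyj : y j ∈ (↑Fj * ↑H : Set G) := by
          rw [← Subgroup.normal_mul Fj H, hFjH]; trivial
        obtain ⟨f, hf, h, hh, heq⟩ := hyj
        have hhF : h ∈ F := by
          have : h = f⁻¹ * y j := by rw [← heq]; group
          rw [this]
          exact F.mul_mem (F.inv_mem (hFjF hf)) (hNF j (hy j))
        have hh1 : h = 1 := by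
          have : h ∈ H ⊓ F := ⟨hh, hhF⟩
          rwa [hHFbot, Subgroup.mem_bot] at this
        have heq' : f = y j := by simpa [hh1] using heq
        have hyFj : y j ∈ Fj := heq' ▸ hf
        have hdis : Disjoint (N j) Fj := hFjeq ▸ hind j
        exact hdis.le_bot (Subgroup.mem_inf.mpr ⟨hy j, hyFj⟩)
      exact hy1 j (Subgroup.mem_bot.mp hNjbot)
    · -- removing x j
      intro j htop
      set K : Subgroup G := Subgroup.closure (x '' {j}ᶜ) with hK
      have hKH : K ≤ H := (Subgroup.closure_le _).mpr (by
        rintro z ⟨k, _, rfl⟩; exact hxH k)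
      have hsub : Subgroup.closure (Fin.append y x '' {Fin.natAdd t j}ᶜ) ≤ F ⊔ K := by
        refine (Subgroup.closure_le _).mpr ?_
        rintro z ⟨k, hk, rfl⟩
        refine Fin.addCases (motive := fun k => k ∈ ({Fin.natAdd t j}ᶜ : Set _) →
          Fin.append y x k ∈ ↑(F ⊔ K)) ?_ ?_ k hk
        · intro k' _
          rw [Fin.append_left]
          exact le_sup_left (a := F) (b := K) (hNF k' (hy k'))
        · intro k' hk'
          rw [Fin.append_right]
          have hne : k' ≠ j := by
            intro h; apply hk'; simp [h]
          exact le_sup_right (a := F) (b := K)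
            (Subgroup.subset_closure ⟨k', hne, rfl⟩)
      have hFK : F ⊔ K = ⊤ := top_unique (htop ▸ hsub)
      have hHK : H ≤ K := by
        intro h hh
        have : h ∈ (↑F * ↑K : Set G) := by
          rw [← Subgroup.normal_mul F K, hFK]; trivial
        obtain ⟨f, hf, k, hk, heq⟩ := this
        have hfH : f ∈ H := by
          have : f = h * k⁻¹ := by rw [← heq]; group
          rw [this]
          exact H.mul_mem hh (H.inv_mem (hKH hk))
        have hf1 : f = 1 := by
          have : f ∈ H ⊓ F := ⟨hfH, hf⟩
          rwa [hHFbot, Subgroup.mem_bot] at this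
        have heq' : k = h := by simpa [hf1] using heq
        exact heq' ▸ hk
      exact hxirr j (le_antisymm hKH hHK)
end

section
/- Let G be a finite soluble group, F its Fitting subgroup with complement H, N a minimal normal subgroup of G contained in F, and F = N × M for a normal subgroup M of G. Then for any nontrivial h ∈ H and nontrivial elements generating the other minimal normal factors, the subgroup generated by M, H, and h (i.e., MH) is a complement of N in G; in particular replacing a generator of N by an element of H in a generating sequence yields a proper subgroup complementing N. -/
open Subgroup
open scoped Classical Pointwise

lemma card_sup_of_disjoint_aux {G : Type*} [Group G] [Finite G] (A B : Subgroup G)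
    (hA : A.Normal) (h : A ⊓ B = ⊥) :
    Nat.card (A ⊔ B : Subgroup G) = Nat.card A * Nat.card B := by
  set L : Subgroup G := A ⊔ B with hL
  have hAL : A ≤ L := le_sup_left
  have hBL : B ≤ L := le_sup_right
  have hA' : (A.subgroupOf L).Normal := hA.subgroupOf L
  have hsup : A.subgroupOf L ⊔ B.subgroupOf L = ⊤ := by
    rw [← subgroupOf_sup hAL hBL, ← hL, subgroupOf_self]
  have hinf : A.subgroupOf L ⊓ B.subgroupOf L = ⊥ := by
    rw [subgroupOf, subgroupOf, ← Subgroup.comap_inf, h]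
    simp [subgroupOf]
  have hcomp : IsComplement' (A.subgroupOf L) (B.subgroupOf L) := by
    apply isComplement'_of_disjoint_and_mul_eq_univ (disjoint_iff.mpr hinf)
    have := Subgroup.normal_mul (A.subgroupOf L) (B.subgroupOf L)
    rw [hsup] at this
    rw [← this, Subgroup.coe_top]
  have := hcomp.card_mul
  rw [Nat.card_congr (subgroupOfEquivOfLe hAL).toEquiv,
    Nat.card_congr (subgroupOfEquivOfLe hBL).toEquiv] at this
  exact this.symm

theorem sup_complement_of_minimal_normal_factor
    (G : Type*) [Group G] [Finite G] [Group.IsSolvable G] (hfr : frattini G = ⊥)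
    (F : Subgroup G) (hF : IsFitting F)
    (H : Subgroup G) (hcompl : H ⊔ F = ⊤ ∧ H ⊓ F = ⊥)
    (N : Subgroup G) (hN : IsMinimalNormal N) (hNF : N ≤ F)
    (M : Subgroup G) (hM : M.Normal) (hNM : N ⊓ M = ⊥) (hNMF : N ⊔ M = F) :
    (M ⊔ H) ⊔ N = ⊤ ∧ (M ⊔ H) ⊓ N = ⊥ ∧ M ⊔ H ≠ ⊤ := by
  obtain ⟨hsupHF, hinfHF⟩ := hcompl
  have hFnorm : F.Normal := hF.1
  have hNnorm : N.Normal := hN.1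
  have hMF : M ≤ F := hNMF ▸ le_sup_right
  have hMHinf : M ⊓ H = ⊥ := by
    rw [← le_bot_iff, ← hinfHF]
    exact le_inf inf_le_right (inf_le_left.trans hMF)
  have hFHinf : F ⊓ H = ⊥ := by rw [inf_comm]; exact hinfHF
  -- cardinalities
  have cardF : Nat.card F = Nat.card N * Nat.card M := by
    have := card_sup_of_disjoint_aux N M hNnorm hNM
    rwa [hNMF] at this
  have cardG : Nat.card G = Nat.card F * Nat.card H := by
    have := card_sup_of_disjoint_aux F H hFnorm hFHinf
    rw [sup_comm] at this
    rw [hsupHF] at this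
    rwa [Nat.card_congr Subgroup.topEquiv.toEquiv] at this
  have cardMH : Nat.card (M ⊔ H : Subgroup G) = Nat.card M * Nat.card H :=
    card_sup_of_disjoint_aux M H hM hMHinf
  -- sup
  have hsup : (M ⊔ H) ⊔ N = ⊤ := by
    rw [sup_right_comm, sup_comm M N, hNMF, sup_comm]
    exact hsupHF
  have cardmul : Nat.card N * Nat.card (M ⊔ H : Subgroup G) = Nat.card G := by
    rw [cardMH, ← mul_assoc, ← cardF, ← cardG]
  -- N * (M ⊔ H) = G as sets
  have hsup2 : N ⊔ (M ⊔ H) = ⊤ := by rw [sup_comm]; exact hsup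
  have hmuluniv : ((N : Set G) * ((M ⊔ H : Subgroup G) : Set G)) = Set.univ := by
    have := Subgroup.normal_mul N (M ⊔ H)
    rw [hsup2] at this
    rw [← this, Subgroup.coe_top]
  have hcomp : IsComplement' N (M ⊔ H) := by
    rw [isComplement'_def, Subgroup.IsComplement,
      Nat.bijective_iff_surjective_and_card]
    constructor
    · intro g
      have hg : g ∈ ((N : Set G) * ((M ⊔ H : Subgroup G) : Set G)) := by
        rw [hmuluniv]; trivial
      obtain ⟨a, ha, b, hb, hab⟩ := hg
      exact ⟨(⟨a, ha⟩, ⟨b, hb⟩), hab⟩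
    · rw [Nat.card_prod]
      exact cardmul
  have hinf : (M ⊔ H) ⊓ N = ⊥ := disjoint_iff.mp hcomp.disjoint.symm
  refine ⟨hsup, hinf, ?_⟩
  · intro htop
    rw [htop, top_inf_eq] at hinf
    exact hN.2.1 hinf
end

section
/- Let G = FH be a finite soluble group where F is the Fitting subgroup with complement H and F is a direct product of minimal normal subgroups of G. If H is a K-group, then G is a K-group. -/
open Subgroup
open scoped Classical

open scoped Pointwise

section Aux
variable {G : Type*} [Group G]

lemma aux_mem_sup_left_normal {K L : Subgroup G} [hK : K.Normal] {x : G} (h : x ∈ K ⊔ L) :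
    ∃ k ∈ K, ∃ l ∈ L, k * l = x := by
  have : x ∈ ((K : Set G) * (L : Set G)) := by rw [← Subgroup.normal_mul]; exact h
  simpa [Set.mem_mul] using this

lemma aux_mem_sup_right_normal {K L : Subgroup G} [hL : L.Normal] {x : G} (h : x ∈ K ⊔ L) :
    ∃ k ∈ K, ∃ l ∈ L, k * l = x := by
  have : x ∈ ((K : Set G) * (L : Set G)) := by rw [← Subgroup.mul_normal]; exact h
  simpa [Set.mem_mul] using this

lemma aux_normal_iSup {ι : Sort*} (f : ι → Subgroup G) (h : ∀ i, (f i).Normal) :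
    (⨆ i, f i).Normal := by
  constructor
  intro x hx g
  refine Subgroup.iSup_induction f (C := fun y => g * y * g⁻¹ ∈ ⨆ i, f i) hx
    (fun i y hy => Subgroup.mem_iSup_of_mem i ((h i).conj_mem y hy g)) (by simpa using one_mem (⨆ i, f i)) ?_
  intro a b ha hb
  have hab : g * (a * b) * g⁻¹ = (g * a * g⁻¹) * (g * b * g⁻¹) := by group
  rw [hab]
  exact mul_mem ha hb

lemma aux_minNormal_comm [Group.IsSolvable G] {N : Subgroup G} (h : IsMinimalNormal N) :
    ∀ x ∈ N, ∀ y ∈ N, x * y = y * x := by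
  obtain ⟨hnorm, hne, hminim⟩ := h
  haveI := hnorm
  rcases hminim ⁅N, N⁆ inferInstance (Subgroup.commutator_le_left N N) with hbot | heq
  · intro x hx y hy
    open scoped commutatorElement in
    have hm : ⁅x, y⁆ ∈ ⁅N, N⁆ := Subgroup.commutator_mem_commutator hx hy
    rw [hbot, Subgroup.mem_bot] at hm
    exact commutatorElement_eq_one_iff_mul_comm.mp hm
  · exfalso
    have key : ∀ n, Subgroup.map N.subtype (derivedSeries ↥N n) = N := by
      intro n
      induction n with
      | zero =>
        rw [derivedSeries_zero, ← MonoidHom.range_eq_map, Subgroup.range_subtype]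
      | succ n ih =>
        rw [derivedSeries_succ, Subgroup.map_commutator, ih, heq]
    obtain ⟨n, hn⟩ := Group.IsSolvable.solvable (G := ↥N)
    have := key n
    rw [hn, Subgroup.map_bot] at this
    exact hne this.symm

end Aux

section AuxB
variable {G : Type*} [Group G]

lemma auxB {t : ℕ} (N : Fin t → Subgroup G)
    (hnorm : ∀ i, (N i).Normal)
    (hminim : ∀ i, ∀ K : Subgroup G, K.Normal → K ≤ N i → K = ⊥ ∨ K = N i)
    (hcomm : ∀ i, ∀ x ∈ N i, ∀ y ∈ N i, x * y = y * x)
    (M : Fin t → Subgroup G)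
    (hMsup : ∀ k, N k ⊔ M k = ⊤) (hMinf : ∀ k, N k ⊓ M k = ⊥)
    (hNM : ∀ k j, j ≠ k → N j ≤ M k)
    (A : Subgroup G) :
    ∀ s : Finset (Fin t), ∀ Y : Subgroup G, A ⊔ Y = ⊤ →
      A ⊓ Y ≤ (⨆ i ∈ s, N i) → (⨆ i ∈ s, N i) ≤ Y →
      ∃ C : Subgroup G, A ⊔ C = ⊤ ∧ A ⊓ C = ⊥ := by
  intro s
  induction s using Finset.induction_on with
  | empty =>
    intro Y h1 h2 _
    refine ⟨Y, h1, le_bot_iff.mp ?_⟩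
    simpa using h2
  | @insert k s' hk ih =>
    intro Y hAY hAYR hRY
    haveI : (N k).Normal := hnorm k
    have hRsimp : (⨆ i ∈ insert k s', N i) = N k ⊔ ⨆ i ∈ s', N i := by
      simp [Finset.mem_insert, iSup_or, iSup_sup_eq]
    set R' : Subgroup G := ⨆ i ∈ s', N i with hR'def
    haveI hR'norm : R'.Normal := by
      refine aux_normal_iSup _ (fun j => aux_normal_iSup _ (fun _ => hnorm j))
    have hNkR : N k ≤ N k ⊔ R' := le_sup_left
    have hNkY : N k ≤ Y := by
      refine le_trans ?_ hRY
      rw [hRsimp]; exact le_sup_left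
    have hR'Y : R' ≤ Y := by
      refine le_trans ?_ hRY
      rw [hRsimp]; exact le_sup_right
    have hR'M : R' ≤ M k := by
      refine iSup_le fun j => iSup_le fun hj => hNM k j ?_
      rintro rfl; exact hk hj
    set C₁ : Subgroup G := Y ⊓ M k with hC₁def
    have hC₁Y : C₁ ≤ Y := inf_le_left
    have hC₁M : C₁ ≤ M k := inf_le_right
    have hR'C₁ : R' ≤ C₁ := le_inf hR'Y hR'M
    have hYle : Y ≤ N k ⊔ C₁ := by
      intro y hy
      have hy' : y ∈ N k ⊔ M k := by rw [hMsup k]; trivial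
      obtain ⟨n, hn, m, hm, hnm⟩ := aux_mem_sup_left_normal hy'
      have hmY : m ∈ Y := by
        have hme : m = n⁻¹ * y := by rw [← hnm]; group
        rw [hme]; exact mul_mem (inv_mem (hNkY hn)) hy
      rw [← hnm]
      exact mul_mem (le_sup_left (α := Subgroup G) hn)
        ((le_sup_right : C₁ ≤ N k ⊔ C₁) (Subgroup.mem_inf.mpr ⟨hmY, hm⟩))
    set J : Subgroup G := A ⊔ C₁ with hJdef
    have hJNk : J ⊔ N k = ⊤ := by
      apply le_antisymm le_top
      rw [← hAY]
      refine sup_le (le_trans le_sup_left le_sup_left) (le_trans hYle ?_)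
      exact sup_le le_sup_right (le_trans le_sup_right le_sup_left)
    have hdec : ∀ a ∈ A ⊓ Y, ∃ n ∈ N k, ∃ r ∈ R', n * r = a := by
      intro a ha
      have : a ∈ N k ⊔ R' := by
        rw [← hRsimp]; exact hAYR ha
      exact aux_mem_sup_left_normal this
    by_cases hJ : J = ⊤
    · refine ih C₁ hJ ?_ hR'C₁
      intro a ha
      have haA : a ∈ A := ha.1
      have haC : a ∈ C₁ := ha.2
      obtain ⟨n, hn, r, hr, hnr⟩ := hdec a ⟨haA, hC₁Y haC⟩
      have hnM : n ∈ M k := by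
        have : n = a * r⁻¹ := by rw [← hnr]; group
        rw [this]; exact mul_mem (hC₁M haC) (inv_mem (hR'M hr))
      have : n ∈ N k ⊓ M k := ⟨hn, hnM⟩
      rw [hMinf k, Subgroup.mem_bot] at this
      rw [this, one_mul] at hnr
      rw [← hnr]; exact hr
    · have hKnorm : (J ⊓ N k).Normal := by
        constructor
        intro x hx g
        have hg : g ∈ J ⊔ N k := by rw [hJNk]; trivial
        obtain ⟨j, hj, n, hn, hjn⟩ := aux_mem_sup_right_normal hg
        have h1 : n * x * n⁻¹ = x := by
          rw [hcomm k n hn x hx.2, mul_inv_cancel_right]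
        have h2 : g * x * g⁻¹ = j * (n * x * n⁻¹) * j⁻¹ := by rw [← hjn]; group
        rw [h2, h1]
        exact ⟨J.mul_mem (J.mul_mem hj hx.1) (J.inv_mem hj),
          (hnorm k).conj_mem x hx.2 j⟩
      have hKbot : J ⊓ N k = ⊥ := by
        rcases hminim k (J ⊓ N k) hKnorm inf_le_right with h | h
        · exact h
        · exfalso
          apply hJ
          have : N k ≤ J := inf_eq_right.mp h
          rw [← hJNk, sup_eq_left.mpr this]
      refine ih (N k ⊔ C₁) ?_ ?_ (le_trans hR'C₁ le_sup_right)
      · rw [sup_comm (N k) C₁, ← sup_assoc, ← hJdef, hJNk]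
      · intro a ha
        have haA : a ∈ A := ha.1
        obtain ⟨n, hn, c, hc, hnc⟩ := aux_mem_sup_left_normal ha.2
        have haY : a ∈ Y := (sup_le hNkY hC₁Y) ha.2
        obtain ⟨n₁, hn₁, r, hr, hn₁r⟩ := hdec a ⟨haA, haY⟩
        have heq : n * c = n₁ * r := by rw [hnc, hn₁r]
        have h2 : n₁⁻¹ * n = r * c⁻¹ := by
          have h3 := congrArg (fun z => n₁⁻¹ * z * c⁻¹) heq
          simpa [mul_assoc] using h3
        have hmem : n₁⁻¹ * n ∈ N k ⊓ M k :=
          ⟨(N k).mul_mem ((N k).inv_mem hn₁) hn,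
            by rw [h2]; exact (M k).mul_mem (hR'M hr) ((M k).inv_mem (hC₁M hc))⟩
        rw [hMinf k, Subgroup.mem_bot] at hmem
        have hnn₁ : n₁ = n := inv_mul_eq_one.mp hmem
        rw [hnn₁] at heq
        have hcr : c = r := mul_left_cancel heq
        have hnJ : n ∈ J := by
          have h4 : n = a * c⁻¹ := by rw [← hnc]; group
          rw [h4]
          exact mul_mem ((le_sup_left : A ≤ J) haA) (inv_mem ((le_sup_right : C₁ ≤ J) hc))
        have h5 : n ∈ J ⊓ N k := ⟨hnJ, hn⟩
        rw [hKbot, Subgroup.mem_bot] at h5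
        rw [h5, one_mul] at hnc
        rw [← hnc, hcr]; exact hr

end AuxB

theorem kGroup_of_complement_kGroup_aux
    (G : Type*) [Group G] [Finite G] [Group.IsSolvable G] (hfr : frattini G = ⊥)
    (F : Subgroup G) {t : ℕ} (N : Fin t → Subgroup G)
    (hmin : ∀ i, IsMinimalNormal (N i)) (hind : iSupIndep N) (hsup : ⨆ i, N i = F)
    (H : Subgroup G) (hcompl : H ⊔ F = ⊤ ∧ H ⊓ F = ⊥)
    (hHK : ∀ X : Subgroup ↥H, ∃ B : Subgroup ↥H, X ⊔ B = ⊤ ∧ X ⊓ B = ⊥) :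
    ∀ A : Subgroup G, ∃ X : Subgroup G, A ⊔ X = ⊤ ∧ A ⊓ X = ⊥ := by
  intro A
  have hnorm : ∀ i, (N i).Normal := fun i => (hmin i).1
  haveI hFnorm : F.Normal := by
    rw [← hsup]; exact aux_normal_iSup _ hnorm
  have hcomm : ∀ i, ∀ x ∈ N i, ∀ y ∈ N i, x * y = y * x := fun i =>
    aux_minNormal_comm (hmin i)
  have hNF : ∀ k, N k ≤ F := fun k => hsup ▸ le_iSup N k
  set Fk : Fin t → Subgroup G := fun k => ⨆ j, ⨆ _ : j ≠ k, N j with hFkdef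
  haveI hFknorm : ∀ k, (Fk k).Normal := fun k =>
    aux_normal_iSup _ (fun j => aux_normal_iSup _ (fun _ => hnorm j))
  have hFkF : ∀ k, Fk k ≤ F := fun k => by
    rw [← hsup]; exact iSup_le fun j => iSup_le fun _ => le_iSup N j
  have hNFk : ∀ k, N k ⊔ Fk k = F := by
    intro k
    apply le_antisymm
    · rw [← hsup]; exact sup_le (le_iSup N k) (hsup ▸ hFkF k)
    · rw [← hsup]
      apply iSup_le; intro j
      by_cases hj : j = k
      · subst hj; exact le_sup_left
      · refine le_trans ?_ le_sup_right
        rw [hFkdef]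
        show _ ≤ ⨆ j, ⨆ _ : j ≠ k, N j
        exact le_trans (le_iSup (fun _ : j ≠ k => N j) hj) (le_iSup (fun i => ⨆ _ : i ≠ k, N i) j)
  set M : Fin t → Subgroup G := fun k => H ⊔ Fk k with hMdef
  have hNjM : ∀ k j, j ≠ k → N j ≤ M k := by
    intro k j hj
    refine le_trans ?_ (le_sup_right : Fk k ≤ M k)
    rw [hFkdef]
    show _ ≤ ⨆ j, ⨆ _ : j ≠ k, N j
    exact le_trans (le_iSup (fun _ : j ≠ k => N j) hj) (le_iSup (fun i => ⨆ _ : i ≠ k, N i) j)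
  have hMsup : ∀ k, N k ⊔ M k = ⊤ := by
    intro k
    calc N k ⊔ (H ⊔ Fk k) = H ⊔ (N k ⊔ Fk k) := sup_left_comm _ _ _
      _ = H ⊔ F := by rw [hNFk k]
      _ = ⊤ := hcompl.1
  have hMinf : ∀ k, N k ⊓ M k = ⊥ := by
    intro k
    rw [eq_bot_iff]
    intro x hx
    obtain ⟨hxN, hxM⟩ := hx
    haveI := hFknorm k
    obtain ⟨h, hh, f, hf, hhf⟩ := aux_mem_sup_right_normal hxM
    have hhF : h ∈ F := by
      have : h = x * f⁻¹ := by rw [← hhf]; group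
      rw [this]; exact F.mul_mem (hNF k hxN) (F.inv_mem (hFkF k hf))
    have : h ∈ H ⊓ F := ⟨hh, hhF⟩
    rw [hcompl.2, Subgroup.mem_bot] at this
    rw [this, one_mul] at hhf
    have : x ∈ N k ⊓ Fk k := ⟨hxN, hhf ▸ hf⟩
    rw [disjoint_iff.mp (hind k)] at this
    exact this
  -- Step 1
  set A₁ : Subgroup G := (A ⊔ F) ⊓ H with hA₁def
  have hA₁H : A₁ ≤ H := inf_le_right
  obtain ⟨B', hB'sup, hB'inf⟩ := hHK (A₁.subgroupOf H)
  set B : Subgroup G := B'.map H.subtype with hBdef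
  have hBH : B ≤ H := Subgroup.map_subtype_le B'
  have hA₁B_sup : A₁ ⊔ B = H := by
    have h1 := congrArg (Subgroup.map H.subtype) hB'sup
    rwa [Subgroup.map_sup, Subgroup.subgroupOf_map_subtype,
      inf_eq_left.mpr hA₁H, ← MonoidHom.range_eq_map, Subgroup.range_subtype] at h1
  have hA₁B_inf : A₁ ⊓ B = ⊥ := by
    have h1 := congrArg (Subgroup.map H.subtype) hB'inf
    rwa [Subgroup.map_inf _ _ _ H.subtype_injective, Subgroup.subgroupOf_map_subtype,
      inf_eq_left.mpr hA₁H, Subgroup.map_bot] at h1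
  set Y₀ : Subgroup G := F ⊔ B with hY₀def
  have hAY₀ : A ⊔ Y₀ = ⊤ := by
    apply le_antisymm le_top
    rw [← hcompl.1]
    refine sup_le ?_ (le_trans le_sup_left le_sup_right)
    rw [← hA₁B_sup]
    refine sup_le (le_trans inf_le_left (sup_le le_sup_left ?_)) ?_
    · exact le_trans le_sup_left le_sup_right
    · exact le_trans le_sup_right le_sup_right
  -- A ⊔ F = F ⊔ A₁, elementwise decomposition
  have hAF_dec : ∀ x ∈ A ⊔ F, ∃ f ∈ F, ∃ a₁ ∈ A₁, f * a₁ = x := by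
    intro x hx
    have hxT : x ∈ F ⊔ H := by
      rw [sup_comm F H, hcompl.1]; trivial
    obtain ⟨f, hf, h, hh, hfh⟩ := aux_mem_sup_left_normal hxT
    have hhAF : h ∈ A ⊔ F := by
      have : h = f⁻¹ * x := by rw [← hfh]; group
      rw [this]
      exact Subgroup.mul_mem _ ((A ⊔ F).inv_mem ((le_sup_right : F ≤ A ⊔ F) hf)) hx
    exact ⟨f, hf, h, ⟨hhAF, hh⟩, hfh⟩
  have hAY₀F : A ⊓ Y₀ ≤ F := by
    intro a ha
    obtain ⟨haA, haY⟩ := ha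
    obtain ⟨f, hf, b, hb, hfb⟩ := aux_mem_sup_left_normal haY
    obtain ⟨f', hf', a₁, ha₁, hfa⟩ := hAF_dec a ((le_sup_left : A ≤ A ⊔ F) haA)
    have heq : f * b = f' * a₁ := by rw [hfb, hfa]
    have h2 : a₁ * b⁻¹ = f'⁻¹ * f := by
      have h3 := congrArg (fun z => f'⁻¹ * z * b⁻¹) heq
      simpa [mul_assoc] using h3.symm
    have hmem : a₁ * b⁻¹ ∈ H ⊓ F :=
      ⟨H.mul_mem (hA₁H ha₁) (H.inv_mem (hBH hb)),
        by rw [h2]; exact F.mul_mem (F.inv_mem hf') hf⟩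
    rw [hcompl.2, Subgroup.mem_bot] at hmem
    have hab : a₁ = b := by
      have := mul_inv_eq_one.mp hmem; exact this
    have ha₁mem : a₁ ∈ A₁ ⊓ B := ⟨ha₁, hab ▸ hb⟩
    rw [hA₁B_inf, Subgroup.mem_bot] at ha₁mem
    rw [ha₁mem, mul_one] at hfa
    rw [← hfa]; exact hf'
  have huniv : (⨆ i ∈ (Finset.univ : Finset (Fin t)), N i) = F := by
    simpa using hsup
  refine auxB N hnorm (fun i => (hmin i).2.2) hcomm M hMsup hMinf hNjM A
    Finset.univ Y₀ hAY₀ ?_ ?_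
  · rw [huniv]; exact hAY₀F
  · rw [huniv]; exact le_sup_left

theorem kGroup_of_complement_kGroup
    (G : Type*) [Group G] [Finite G] [Group.IsSolvable G] (hfr : frattini G = ⊥)
    (F : Subgroup G) (hF : IsFitting F) {t : ℕ} (N : Fin t → Subgroup G)
    (hmin : ∀ i, IsMinimalNormal (N i)) (hind : iSupIndep N) (hsup : ⨆ i, N i = F)
    (H : Subgroup G) (hcompl : H ⊔ F = ⊤ ∧ H ⊓ F = ⊥)
    (hHK : IsKGroup ↥H) :
    IsKGroup G := by
  intro A
  exact kGroup_of_complement_kGroup_aux G hfr F N hmin hind hsup H hcompl hHK A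
end
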